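/- Let M be a real hypersurface of M₂(c), c ≠ 0, with structure Jacobi operator l satisfying φl = lφ on ker(η). On the open set where α = g(Aξ,ξ) ≠ 0 and β ≠ 0 (with Aξ = αξ + βU, U a unit field in ker(η)), the shape operator satisfies AU = (γ/α − c/(4α) + β²/α)U + βξ and AφU = (γ/α − c/(4α))φU, where γ = g(lU,U). -/

import Mathlib

open RealInnerProductSpace

set_option maxHeartbeats 1600000 in
/-- On the set where α ≠ 0 and β ≠ 0, with φl = lφ on ker(η),
the shape operator satisfies AU = (γ/α − c/(4α) + β²/α)U and
AφU = (γ/α − c/(4α))φU, where γ = g(lU,U). -/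
theorem stmt_1 {V : Type*} [NormedAddCommGroup V] [InnerProductSpace ℝ V]
    (φ A : V →ₗ[ℝ] V) (l : V → V) (ξ U : V) (c α β γ : ℝ)
    (hc : c ≠ 0) (hα : α ≠ 0) (hβ : β ≠ 0)
    (hξ : ⟪ξ, ξ⟫ = 1) (hU : ⟪U, U⟫ = 1) (hUξ : ⟪U, ξ⟫ = 0)
    (hAsym : ∀ X Y : V, ⟪A X, Y⟫ = ⟪X, A Y⟫)
    (hφskew : ∀ X Y : V, ⟪X, φ Y⟫ = -⟪φ X, Y⟫)
    (hφξ : φ ξ = 0)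
    (hηφ : ∀ X : V, ⟪φ X, ξ⟫ = 0)
    (hφ2 : ∀ X : V, φ (φ X) = -X + ⟪X, ξ⟫ • ξ)
    (hφiso : ∀ X Y : V, ⟪φ X, φ Y⟫ = ⟪X, Y⟫ - ⟪X, ξ⟫ * ⟪Y, ξ⟫)
    (hspan : ∀ X : V, ∃ a b d : ℝ, X = a • U + b • φ U + d • ξ)
    (hαdef : α = ⟪A ξ, ξ⟫)
    (hl : ∀ X : V, l X = (c/4) • (X - ⟪X, ξ⟫ • ξ) + α • A X - ⟪A X, ξ⟫ • A ξ)
    (hAξ : A ξ = α • ξ + β • U)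
    (hγ : γ = ⟪l U, U⟫)
    (hcomm : ∀ X : V, ⟪X, ξ⟫ = 0 → φ (l X) = l (φ X)) :
    A U = (γ/α - c/(4*α) + β^2/α) • U + β • ξ ∧
    A (φ U) = (γ/α - c/(4*α)) • φ U := by
  obtain ⟨a, b, d, hAU⟩ := hspan (A U)
  obtain ⟨p, q, r, hAφU⟩ := hspan (A (φ U))
  have hUφU : ⟪U, φ U⟫ = 0 := by
    have h := hφskew U U
    have h2 : ⟪φ U, U⟫ = ⟪U, φ U⟫ := real_inner_comm _ _
    linarith
  have hφUU : ⟪φ U, U⟫ = 0 := by rw [real_inner_comm]; exact hUφU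
  have hφUφU : ⟪φ U, φ U⟫ = 1 := by rw [hφiso, hU, hUξ]; ring
  have hφUξ : ⟪φ U, ξ⟫ = 0 := hηφ U
  have hξU : ⟪ξ, U⟫ = 0 := by rw [real_inner_comm]; exact hUξ
  have hξφU : ⟪ξ, φ U⟫ = 0 := by rw [real_inner_comm]; exact hφUξ
  have innAUξ : ⟪A U, ξ⟫ = β := by
    rw [hAsym, hAξ]
    simp [-inner_self_eq_norm_sq_to_K, inner_add_right, real_inner_smul_right, hUξ, hU]
  have innAφUξ : ⟪A (φ U), ξ⟫ = 0 := by
    rw [hAsym, hAξ]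
    simp [-inner_self_eq_norm_sq_to_K, inner_add_right, real_inner_smul_right, hφUξ, hφUU]
  have hd : d = β := by
    have h := innAUξ
    rw [hAU] at h
    simpa [-inner_self_eq_norm_sq_to_K, inner_add_left, real_inner_smul_left, hUξ, hφUξ, hξ] using h
  rw [hd] at hAU
  have hr : r = 0 := by
    have h := innAφUξ
    rw [hAφU] at h
    simpa [-inner_self_eq_norm_sq_to_K, inner_add_left, real_inner_smul_left, hUξ, hφUξ, hξ] using h
  rw [hr] at hAφU
  have hp : p = b := by
    have h : ⟪A (φ U), U⟫ = ⟪φ U, A U⟫ := hAsym _ _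
    rw [hAφU, hAU] at h
    simpa [-inner_self_eq_norm_sq_to_K, inner_add_left, inner_add_right, real_inner_smul_left,
      real_inner_smul_right, hU, hUφU, hφUU, hφUφU, hξU, hφUξ, hUξ] using h
  rw [hp] at hAφU
  have hlU : l U = (c/4 + α*a - β*β) • U + (α*b) • φ U := by
    rw [hl, innAUξ, hUξ, hAU, hAξ]
    module
  have hlφU : l (φ U) = (α*b) • U + (c/4 + α*q) • φ U := by
    rw [hl, innAφUξ, hφUξ, hAφU]
    module
  have hγa : γ = c/4 + α*a - β*β := by
    rw [hγ, hlU]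
    simp [-inner_self_eq_norm_sq_to_K, inner_add_left, real_inner_smul_left, hU, hφUU]
  have hφφU : φ (φ U) = -U := by rw [hφ2, hUξ]; module
  have hc1 := hcomm U hUξ
  rw [hlU, hlφU] at hc1
  simp only [map_add, map_smul, hφφU] at hc1
  have eb : -(α*b) = α*b := by
    have h := congrArg (fun x => ⟪x, U⟫) hc1
    simpa [-inner_self_eq_norm_sq_to_K, inner_add_left, real_inner_smul_left, inner_neg_left, hU, hφUU] using h
  have eq2 : c/4 + α*a - β*β = c/4 + α*q := by
    have h := congrArg (fun x => ⟪x, φ U⟫) hc1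
    simpa [-inner_self_eq_norm_sq_to_K, inner_add_left, real_inner_smul_left, inner_neg_left, hUφU, hφUφU] using h
  have hb : b = 0 := by
    rcases mul_eq_zero.mp (by linarith : α * b = 0) with h | h
    · exact absurd h hα
    · exact h
  subst hb
  constructor
  · have ha : γ/α - c/(4*α) + β^2/α = a := by
      rw [hγa]
      field_simp
      ring
    rw [hAU, ha]
    module
  · have hq : γ/α - c/(4*α) = q := by
      have h2 : γ - c/4 = α*q := by rw [hγa]; linarith [eq2]
      calc γ/α - c/(4*α) = (γ - c/4)/α := by ring
        _ = (α*q)/α := by rw [h2]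
        _ = q := mul_div_cancel_left₀ q hα
    rw [hAφU, hq]
    module
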